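/- For any permutation σ of {1,…,N} and commuting nonzero variables ξ_1,…,ξ_N, the product over all inversions (β,α) of σ (pairs with β>α where β appears before α in σ) of ξ_β/ξ_α equals ∏_{i=1}^{N} ξ_{σ(i)}^{σ(i)-i}. -/

import Mathlib

/-- For any permutation σ of Fin N and nonzero field elements ξ_1,…,ξ_N, the product
over all inversions (pairs of positions i<j with σ i > σ j, the inversion being the
pair of entries (σ i, σ j)) of ξ_{σ i}/ξ_{σ j} equals ∏ i, ξ_{σ i}^{σ i - i}. -/
theorem inversion_product_eq {K : Type*} [Field K] (N : ℕ)
    (σ : Equiv.Perm (Fin N)) (ξ : Fin N → K) (hξ : ∀ i, ξ i ≠ 0) :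
    ∏ p ∈ Finset.univ.filter
        (fun p : Fin N × Fin N => p.1 < p.2 ∧ σ p.2 < σ p.1),
      ξ (σ p.1) / ξ (σ p.2)
      = ∏ i : Fin N, ξ (σ i) ^ ((σ i : ℤ) - (i : ℤ)) := by
  classical
  set s := Finset.univ.filter
      (fun p : Fin N × Fin N => p.1 < p.2 ∧ σ p.2 < σ p.1) with hs
  set a : Fin N → ℕ := fun i =>
    (Finset.univ.filter (fun j : Fin N => i < j ∧ σ j < σ i)).card with ha
  set b : Fin N → ℕ := fun i =>
    (Finset.univ.filter (fun j : Fin N => j < i ∧ σ i < σ j)).card with hb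
  -- key counting identity: a i + i = σ i + b i
  have key : ∀ i : Fin N, a i + (i : ℕ) = (σ i : ℕ) + b i := by
    intro i
    have h1 : (Finset.univ.filter (fun j : Fin N => j < i)).card = (i : ℕ) := by
      have : Finset.univ.filter (fun j : Fin N => j < i) = Finset.Iio i := by
        ext j; simp
      rw [this, Fin.card_Iio]
    have h2 : (Finset.univ.filter (fun j : Fin N => σ j < σ i)).card = (σ i : ℕ) := by
      have : Finset.univ.filter (fun j : Fin N => σ j < σ i)
          = (Finset.Iio (σ i)).map σ.symm.toEmbedding := by
        ext j
        simp [Equiv.symm_apply_eq, eq_comm]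
      rw [this, Finset.card_map, Fin.card_Iio]
    have h3 := Finset.card_filter_add_card_filter_not
      (s := Finset.univ.filter (fun j : Fin N => j < i))
      (p := fun j => σ j < σ i)
    have h4 := Finset.card_filter_add_card_filter_not
      (s := Finset.univ.filter (fun j : Fin N => σ j < σ i))
      (p := fun j => j < i)
    rw [Finset.filter_filter, Finset.filter_filter, h1] at h3
    rw [Finset.filter_filter, Finset.filter_filter, h2] at h4
    have e3 : Finset.univ.filter (fun j : Fin N => j < i ∧ ¬ σ j < σ i)
        = Finset.univ.filter (fun j : Fin N => j < i ∧ σ i < σ j) := by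
      ext j
      simp only [Finset.mem_filter, Finset.mem_univ, true_and, and_congr_right_iff]
      intro hj
      have hne : σ j ≠ σ i := fun h => absurd (σ.injective h) (ne_of_lt hj)
      constructor
      · intro h; exact lt_of_le_of_ne (not_lt.mp h) (Ne.symm hne)
      · exact fun h => not_lt.mpr (le_of_lt h)
    have e4 : Finset.univ.filter (fun j : Fin N => σ j < σ i ∧ ¬ j < i)
        = Finset.univ.filter (fun j : Fin N => i < j ∧ σ j < σ i) := by
      ext j
      simp only [Finset.mem_filter, Finset.mem_univ, true_and]
      constructor
      · rintro ⟨h1', h2'⟩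
        have hne : j ≠ i := fun h => absurd (h ▸ h1') (lt_irrefl _)
        exact ⟨lt_of_le_of_ne (not_lt.mp h2') (Ne.symm hne), h1'⟩
      · rintro ⟨h1', h2'⟩
        exact ⟨h2', not_lt.mpr (le_of_lt h1')⟩
    rw [e3] at h3
    rw [e4] at h4
    have ecomm : Finset.univ.filter (fun a : Fin N => σ a < σ i ∧ a < i)
        = Finset.univ.filter (fun a : Fin N => a < i ∧ σ a < σ i) := by
      ext j; simp [and_comm]
    rw [ecomm] at h4
    simp only [ha, hb]
    omega
  -- fiber cardinalities
  have hcard1 : ∀ i : Fin N, (s.filter (fun p => p.1 = i)).card = a i := by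
    intro i
    have : s.filter (fun p => p.1 = i)
        = (Finset.univ.filter (fun j : Fin N => i < j ∧ σ j < σ i)).map
          ⟨fun j => (i, j), fun x y h => by simpa using h⟩ := by
      ext ⟨x, y⟩
      simp only [hs, Finset.mem_filter, Finset.mem_univ, true_and, Finset.mem_map,
        Function.Embedding.coeFn_mk, Prod.mk.injEq]
      constructor
      · rintro ⟨⟨h1, h2⟩, rfl⟩
        exact ⟨y, ⟨h1, h2⟩, rfl⟩
      · rintro ⟨j, ⟨h1, h2⟩, rfl, rfl⟩
        exact ⟨⟨h1, h2⟩, rfl⟩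
    rw [this, Finset.card_map, ha]
  have hcard2 : ∀ i : Fin N, (s.filter (fun p => p.2 = i)).card = b i := by
    intro i
    have : s.filter (fun p => p.2 = i)
        = (Finset.univ.filter (fun j : Fin N => j < i ∧ σ i < σ j)).map
          ⟨fun j => (j, i), fun x y h => by simpa using h⟩ := by
      ext ⟨x, y⟩
      simp only [hs, Finset.mem_filter, Finset.mem_univ, true_and, Finset.mem_map,
        Function.Embedding.coeFn_mk, Prod.mk.injEq]
      constructor
      · rintro ⟨⟨h1, h2⟩, rfl⟩
        exact ⟨x, ⟨h1, h2⟩, rfl⟩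
      · rintro ⟨j, ⟨h1, h2⟩, rfl, rfl⟩
        exact ⟨⟨h1, h2⟩, rfl⟩
    rw [this, Finset.card_map, hb]
  -- split product of quotients
  have P1 : ∏ p ∈ s, ξ (σ p.1) = ∏ i : Fin N, ξ (σ i) ^ a i := by
    rw [← Finset.prod_fiberwise' s Prod.fst (fun j => ξ (σ j))]
    refine Finset.prod_congr rfl fun i _ => ?_
    rw [Finset.prod_const, hcard1]
  have P2 : ∏ p ∈ s, ξ (σ p.2) = ∏ i : Fin N, ξ (σ i) ^ b i := by
    rw [← Finset.prod_fiberwise' s Prod.snd (fun j => ξ (σ j))]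
    refine Finset.prod_congr rfl fun i _ => ?_
    rw [Finset.prod_const, hcard2]
  rw [Finset.prod_div_distrib, P1, P2, ← Finset.prod_div_distrib]
  refine Finset.prod_congr rfl fun i _ => ?_
  have hne : ξ (σ i) ≠ 0 := hξ (σ i)
  have : ((σ i : ℤ) - (i : ℤ)) = (a i : ℤ) - (b i : ℤ) := by
    have := key i; omega
  rw [this, zpow_sub₀ hne, zpow_natCast, zpow_natCast]
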